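/- Superstability for Hilbert spaces with a group of automorphisms: let G be a countable group, π a unitary representation of G on H, a₁,…,aₙ ∈ H, A ⊆ H, and ε > 0. Let C be the closed linear span of {π(g)a : g ∈ G, a ∈ A}. Then there exist b₁,…,bₙ ∈ H and a finite A₀ ⊆ A such that ‖aᵢ − bᵢ‖ < ε for all i, and for each i, bᵢ − P_{C₀}(bᵢ) is orthogonal to C ⊖ C₀ where C₀ is the closed linear span of {π(g)a : g ∈ G, a ∈ A₀} — indeed one may take bᵢ = aᵢ − P_C(aᵢ) + P_{C₀}(aᵢ). -/

import Mathlib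

open scoped InnerProductSpace

/-- Superstability for Hilbert spaces with a group of automorphisms: given
`a₁, …, aₙ ∈ H`, `A ⊆ H` and `ε > 0`, with `C` the closed span of the `G`-orbit of `A`,
there are `b₁, …, bₙ` (namely `bᵢ = aᵢ - P_C aᵢ + P_{C₀} aᵢ`) and a finite `A₀ ⊆ A` such
that `‖aᵢ - bᵢ‖ < ε` and `bᵢ - P_{C₀} bᵢ` is orthogonal to `C ⊖ C₀`, where `C₀` is the
closed span of the `G`-orbit of `A₀`. -/
theorem superstable
    {G : Type*} [Group G] [Countable G] {H : Type*}
    [NormedAddCommGroup H] [InnerProductSpace ℂ H] [CompleteSpace H]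
    (π : G →* (H ≃ₗᵢ[ℂ] H)) (n : ℕ) (a : Fin n → H) (A : Set H) (ε : ℝ) (hε : 0 < ε) :
    ∃ (b : Fin n → H) (A₀ : Finset H), ↑A₀ ⊆ A ∧
      (letI C := (Submodule.span ℂ {v : H | ∃ (g : G), ∃ x ∈ A, v = π g x}).topologicalClosure
       letI C₀ :=
         (Submodule.span ℂ {v : H | ∃ (g : G), ∃ x ∈ (↑A₀ : Set H), v = π g x}).topologicalClosure
       ∀ i : Fin n,
         b i = a i - (C.orthogonalProjectionOnto (a i) : H) + (C₀.orthogonalProjectionOnto (a i) : H) ∧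
         ‖a i - b i‖ < ε ∧
         ∀ v ∈ C, v ∈ C₀ᗮ →
           ⟪b i - (C₀.orthogonalProjectionOnto (b i) : H), v⟫_ℂ = 0) := by
  classical
  set S : Set H := {v : H | ∃ (g : G), ∃ x ∈ A, v = π g x} with hS
  set C := (Submodule.span ℂ S).topologicalClosure with hC
  -- For each i, find sᵢ in the span within ε of P_C (a i), and a finite A₀ᵢ ⊆ A
  -- whose orbit-span contains sᵢ.
  have key : ∀ i : Fin n, ∃ (s : H) (A₀ : Finset H), ↑A₀ ⊆ A ∧
      ‖(C.orthogonalProjectionOnto (a i) : H) - s‖ < ε ∧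
      s ∈ Submodule.span ℂ {v : H | ∃ (g : G), ∃ x ∈ (↑A₀ : Set H), v = π g x} := by
    intro i
    have hmem : (C.orthogonalProjectionOnto (a i) : H) ∈ C := (C.orthogonalProjectionOnto (a i)).2
    have hmem' : (C.orthogonalProjectionOnto (a i) : H) ∈
        closure (Submodule.span ℂ S : Set H) := hmem
    rw [Metric.mem_closure_iff] at hmem'
    obtain ⟨s, hsSpan, hsd⟩ := hmem' ε hε
    obtain ⟨t, htS, hst⟩ := Submodule.mem_span_finite_of_mem_span hsSpan
    -- choose witnesses
    choose g x hx hxeq using fun v (hv : v ∈ S) => hv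
    refine ⟨s, t.image (fun v => if hv : v ∈ S then x v hv else 0), ?_, ?_, ?_⟩
    · intro y hy
      simp only [Finset.coe_image, Set.mem_image] at hy
      obtain ⟨v, hvt, rfl⟩ := hy
      have hvS : v ∈ S := htS hvt
      rw [dif_pos hvS]
      exact hx v hvS
    · rwa [dist_eq_norm] at hsd
    · refine Submodule.span_mono ?_ hst
      intro v hvt
      have hvS : v ∈ S := htS hvt
      refine ⟨g v hvS, x v hvS, ?_, hxeq v hvS⟩
      simp only [Finset.coe_image, Set.mem_image]
      exact ⟨v, hvt, by rw [dif_pos hvS]⟩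
  choose s A₀i hA₀iA hdist hsspan using key
  set A₀ : Finset H := Finset.univ.biUnion A₀i with hA₀
  have hA₀A : ↑A₀ ⊆ A := by
    intro y hy
    simp only [hA₀, Finset.coe_biUnion, Finset.mem_coe, Set.mem_iUnion] at hy
    obtain ⟨i, _, hi⟩ := hy
    exact hA₀iA i hi
  set S₀ : Set H := {v : H | ∃ (g : G), ∃ x ∈ (↑A₀ : Set H), v = π g x} with hS₀
  set C₀ := (Submodule.span ℂ S₀).topologicalClosure with hC₀
  have hC₀C : C₀ ≤ C := by
    apply Submodule.topologicalClosure_mono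
    apply Submodule.span_mono
    rintro v ⟨g, x, hxA₀, rfl⟩
    exact ⟨g, x, hA₀A hxA₀, rfl⟩
  have hsC₀ : ∀ i, s i ∈ C₀ := by
    intro i
    apply Submodule.le_topologicalClosure
    refine Submodule.span_mono ?_ (hsspan i)
    rintro v ⟨g, x, hxA₀i, rfl⟩
    refine ⟨g, x, ?_, rfl⟩
    simp only [hA₀, Finset.coe_biUnion, Finset.mem_coe, Set.mem_iUnion]
    exact ⟨i, Finset.mem_univ i, hxA₀i⟩
  refine ⟨fun i => a i - (C.orthogonalProjectionOnto (a i) : H) +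
      (C₀.orthogonalProjectionOnto (a i) : H), A₀, hA₀A, fun i => ?_⟩
  have hproj : (C₀.orthogonalProjectionOnto (a i) : H) =
      (C₀.orthogonalProjectionOnto ((C.orthogonalProjectionOnto (a i) : H)) : H) := by
    exact congrArg Subtype.val (Submodule.orthogonalProjectionOnto_starProjection_of_le hC₀C (a i)).symm
  refine ⟨rfl, ?_, ?_⟩
  · have h1 : a i - (a i - (C.orthogonalProjectionOnto (a i) : H) +
        (C₀.orthogonalProjectionOnto (a i) : H)) =
        (C.orthogonalProjectionOnto (a i) : H) - (C₀.orthogonalProjectionOnto (a i) : H) := by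
      abel
    rw [h1, hproj]
    set u := (C.orthogonalProjectionOnto (a i) : H)
    calc ‖u - (C₀.orthogonalProjectionOnto u : H)‖ = ⨅ x : C₀, ‖u - x‖ :=
          Submodule.starProjection_minimal u
      _ ≤ ‖u - (⟨s i, hsC₀ i⟩ : C₀)‖ :=
          ciInf_le ⟨0, fun r ⟨x, hx⟩ => hx ▸ norm_nonneg _⟩ _
      _ < ε := hdist i
  · intro v hvC _
    -- compute P_{C₀}(b i) = P_{C₀}(a i)
    have hperp : a i - (C.orthogonalProjectionOnto (a i) : H) ∈ Cᗮ :=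
      Submodule.sub_starProjection_mem_orthogonal (a i)
    have hperp₀ : a i - (C.orthogonalProjectionOnto (a i) : H) ∈ C₀ᗮ :=
      Submodule.orthogonal_le hC₀C hperp
    have hPb : (C₀.orthogonalProjectionOnto (a i - (C.orthogonalProjectionOnto (a i) : H) +
        (C₀.orthogonalProjectionOnto (a i) : H)) : H) = (C₀.orthogonalProjectionOnto (a i) : H) := by
      rw [map_add, Submodule.orthogonalProjectionOnto_apply_of_mem_orthogonal hperp₀,
        Submodule.orthogonalProjectionOnto_mem_subspace_eq_self]
      simp
    rw [hPb]
    have h2 : a i - (C.orthogonalProjectionOnto (a i) : H) +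
        (C₀.orthogonalProjectionOnto (a i) : H) - (C₀.orthogonalProjectionOnto (a i) : H) =
        a i - (C.orthogonalProjectionOnto (a i) : H) := by abel
    rw [h2]
    exact (Submodule.mem_orthogonal' C _).mp hperp v hvC
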